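/- arXiv:1703.08331 — 2 statements merged into one kernel-verified Lean document; each statement's English description precedes it below -/
import Mathlib

section
/- Let $c_1,c>0$ and $\zeta>0$, and let $M:[0,T]\to[0,\infty)$ be a $C^1$ function satisfying the differential inequality $M'(t) + c_1 M(t)^{1+\zeta} \leq c$ for $t\in(0,T]$. Then there is a constant $C_M$ depending only on $c_1,c,\zeta,T$ (not on $M(0)$) such that $M(t) \leq C_M(1 + t^{-1/\zeta})$ for all $t\in(0,T]$. -/
open Set

lemma rpow_add_rpow_le' {x y p : ℝ} (hx : 0 ≤ x) (hy : 0 ≤ y) (hp : 1 ≤ p) :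
    x ^ p + y ^ p ≤ (x + y) ^ p := by
  lift x to NNReal using hx
  lift y to NNReal using hy
  exact_mod_cast NNReal.add_rpow_le_rpow_add x y hp

/-- Nonlinear Gronwall lemma: if `M ≥ 0` is `C¹` on `[0,T]` and satisfies
`M' + c₁ M^{1+ζ} ≤ c` on `(0,T]`, then `M(t) ≤ C_M (1 + t^{-1/ζ})` on `(0,T]`
with `C_M` depending only on `c₁, c, ζ, T` (not on `M(0)`). -/
theorem nonlinear_gronwall
    (c₁ c ζ T : ℝ) (hc₁ : 0 < c₁) (hc : 0 < c) (hζ : 0 < ζ) (hT : 0 < T) :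
    ∃ C_M : ℝ, 0 < C_M ∧
      ∀ (M M' : ℝ → ℝ),
        (∀ t ∈ Icc (0:ℝ) T, 0 ≤ M t) →
        (∀ t ∈ Icc (0:ℝ) T, HasDerivWithinAt M (M' t) (Icc 0 T) t) →
        (∀ t ∈ Ioc (0:ℝ) T, M' t + c₁ * M t ^ (1 + ζ) ≤ c) →
        ∀ t ∈ Ioc (0:ℝ) T, M t ≤ C_M * (1 + t ^ (-(1 / ζ))) := by
  set p : ℝ := 1 / ζ with hp_def
  have hp_pos : 0 < p := by positivity
  have hpζ : p * ζ = 1 := by rw [hp_def]; field_simp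
  set a : ℝ := (1 / (c₁ * ζ)) ^ p with ha_def
  set A : ℝ := ((c + 1) / c₁) ^ (1 / (1 + ζ)) with hA_def
  have ha_pos : 0 < a := Real.rpow_pos_of_pos (by positivity) _
  have hA_pos : 0 < A := Real.rpow_pos_of_pos (by positivity) _
  have hζ1 : (0:ℝ) < 1 + ζ := by linarith
  -- key constant identities
  have hc₁a : c₁ * a ^ (1 + ζ) = a * p := by
    have h1 : a ^ ζ = 1 / (c₁ * ζ) := by
      rw [ha_def, ← Real.rpow_mul (by positivity), hpζ, Real.rpow_one]
    have h2 : a ^ (1 + ζ) = a * (1 / (c₁ * ζ)) := by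
      rw [Real.rpow_add ha_pos, Real.rpow_one, h1]
    rw [h2, hp_def]; field_simp
  have hc₁A : c₁ * A ^ (1 + ζ) = c + 1 := by
    have h1 : A ^ (1 + ζ) = (c + 1) / c₁ := by
      rw [hA_def, ← Real.rpow_mul (by positivity), one_div_mul_cancel hζ1.ne', Real.rpow_one]
    rw [h1]; field_simp
  refine ⟨a + A, by positivity, ?_⟩
  intro M M' hM0 hMd hODE t ht
  have hMc : ContinuousOn M (Icc 0 T) := fun x hx => (hMd x hx).continuousWithinAt
  obtain ⟨L, hL⟩ := isCompact_Icc.exists_bound_of_continuousOn hMc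
  set L' : ℝ := max L 1 with hL'_def
  have hL'_pos : 0 < L' := lt_of_lt_of_le one_pos (le_max_right _ _)
  set s₀ : ℝ := min t ((a / L') ^ ζ) with hs₀_def
  have hs₀_pos : 0 < s₀ := lt_min ht.1 (Real.rpow_pos_of_pos (by positivity) _)
  have hs₀_le : s₀ ≤ t := min_le_left _ _
  have hs₀T : s₀ ≤ T := hs₀_le.trans ht.2
  set B : ℝ → ℝ := fun x => a * x ^ (-p) + A with hB_def
  set B' : ℝ → ℝ := fun x => a * (-p * x ^ (-p - 1)) with hB'_def
  have hBd : ∀ x : ℝ, 0 < x → HasDerivAt B (B' x) x := by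
    intro x hx
    exact ((Real.hasDerivAt_rpow_const (Or.inl hx.ne')).const_mul a).add_const A
  -- hypotheses of the fencing theorem
  have hf : ContinuousOn M (Icc s₀ t) := hMc.mono (Icc_subset_Icc hs₀_pos.le ht.2)
  have hf' : ∀ x ∈ Ico s₀ t, HasDerivWithinAt M (M' x) (Ici x) x := by
    intro x hx
    have hx0 : (0:ℝ) ≤ x := hs₀_pos.le.trans hx.1
    have hxT : x < T := lt_of_lt_of_le hx.2 ht.2
    exact (hMd x ⟨hx0, hxT.le⟩).mono_of_mem_nhdsWithin
      (Filter.mem_of_superset (Icc_mem_nhdsGE_of_mem ⟨le_refl x, hxT⟩)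
        (Icc_subset_Icc hx0 le_rfl))
  have hinit : M s₀ ≤ B s₀ := by
    have h1 : s₀ ^ p ≤ a / L' := by
      calc s₀ ^ p ≤ ((a / L') ^ ζ) ^ p :=
            Real.rpow_le_rpow hs₀_pos.le (min_le_right _ _) hp_pos.le
      _ = a / L' := by
            rw [← Real.rpow_mul (by positivity)]
            rw [show ζ * p = 1 by rw [mul_comm]; exact hpζ, Real.rpow_one]
    have h2 : L' ≤ a * s₀ ^ (-p) := by
      rw [Real.rpow_neg hs₀_pos.le, ← div_eq_mul_inv,
        le_div_iff₀ (Real.rpow_pos_of_pos hs₀_pos _)]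
      calc L' * s₀ ^ p ≤ L' * (a / L') := mul_le_mul_of_nonneg_left h1 hL'_pos.le
      _ = a := by field_simp
    have h3 : M s₀ ≤ L := (le_abs_self _).trans (by simpa using hL s₀ ⟨hs₀_pos.le, hs₀T⟩)
    calc M s₀ ≤ L' := h3.trans (le_max_left _ _)
    _ ≤ a * s₀ ^ (-p) := h2
    _ ≤ B s₀ := by simp only [hB_def]; linarith
  have hBc : ContinuousOn B (Icc s₀ t) := by
    intro x hx
    exact (hBd x (hs₀_pos.trans_le hx.1)).continuousAt.continuousWithinAt
  have hB' : ∀ x ∈ Ico s₀ t, HasDerivWithinAt B (B' x) (Ici x) x := fun x hx =>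
    (hBd x (hs₀_pos.trans_le hx.1)).hasDerivWithinAt
  have hbound : ∀ x ∈ Ico s₀ t, M x = B x → M' x < B' x := by
    intro x hx hcontact
    have hx0 : 0 < x := hs₀_pos.trans_le hx.1
    have hxT : x ≤ T := hx.2.le.trans ht.2
    have hode := hODE x ⟨hx0, hxT⟩
    have hxp : (0:ℝ) < x ^ (-p - 1) := Real.rpow_pos_of_pos hx0 _
    have hBx : a * p * x ^ (-p - 1) + (c + 1) ≤ c₁ * B x ^ (1 + ζ) := by
      have hsup : (a * x ^ (-p)) ^ (1 + ζ) + A ^ (1 + ζ) ≤ B x ^ (1 + ζ) :=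
        rpow_add_rpow_le' (by positivity) hA_pos.le (by linarith)
      have he : (a * x ^ (-p)) ^ (1 + ζ) = a ^ (1 + ζ) * x ^ (-p - 1) := by
        rw [Real.mul_rpow ha_pos.le (Real.rpow_pos_of_pos hx0 _).le,
          ← Real.rpow_mul hx0.le,
          show -p * (1 + ζ) = -p - 1 from by linear_combination -hpζ]
      have hmul := mul_le_mul_of_nonneg_left hsup hc₁.le
      rw [mul_add, he, ← mul_assoc, hc₁A] at hmul
      calc a * p * x ^ (-p - 1) + (c + 1)
          = c₁ * a ^ (1 + ζ) * x ^ (-p - 1) + (c + 1) := by rw [hc₁a]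
      _ ≤ c₁ * B x ^ (1 + ζ) := by rw [mul_assoc] at hmul ⊢; linarith
    have hMB : c₁ * M x ^ (1 + ζ) = c₁ * B x ^ (1 + ζ) := by rw [hcontact]
    have hlt : M' x ≤ -(a * p * x ^ (-p - 1)) - 1 := by
      rw [hMB] at hode; linarith
    calc M' x ≤ -(a * p * x ^ (-p - 1)) - 1 := hlt
    _ < B' x := by simp only [hB'_def]; ring_nf; linarith
  have key := image_le_of_deriv_right_lt_deriv_boundary' hf hf' hinit hBc hB' hbound
  have hkey := key ⟨hs₀_le, le_rfl⟩
  have htp : (0:ℝ) < t ^ (-p) := Real.rpow_pos_of_pos ht.1 _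
  have hBt : B t = a * t ^ (-p) + A := by rw [hB_def]
  nlinarith [hkey, htp, ha_pos, hA_pos, hBt]
end

section
/- With $\mathcal{W}(t)$ the transport semigroup from the diffeomorphism $\Theta(y)=\int_{y_0}^y dy'/\tau(y')$ where $\tau\in BC^1$, $\tau\geq\tau_0>0$, and $\tau(y)\leq\tau_* y$ for all $y>y_0$ (with $\tau_*=\|\tau\|_\infty/y_0$), one has the stability estimate $\|\mathcal{W}(t)f\|_{L_1(Y,y\,dy)} \leq e^{\tau_* t}\,\|f\|_{L_1(Y,y\,dy)}$ for all $t\geq 0$ and $f\in L_1(Y,y\,dy)$. -/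
open MeasureTheory Set

/-- Stability estimate for the transport semigroup: with `τ* = ‖τ‖_∞ / y₀`
(so that `τ(y) ≤ τ* y` on `Y`), one has
`‖W(t) f‖_{L₁(Y, y dy)} ≤ e^{τ* t} ‖f‖_{L₁(Y, y dy)}`. -/
theorem transport_semigroup_stable
    (y₀ τ₀ Cτ : ℝ) (hy₀ : 0 < y₀) (hτ₀ : 0 < τ₀)
    (τ : ℝ → ℝ)
    (hτC1 : ContDiffOn ℝ 1 τ (Ici y₀))
    (hτlb : ∀ y, y₀ < y → τ₀ ≤ τ y) (hτub : ∀ y, y₀ < y → τ y ≤ Cτ)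
    (Θ Θinv : ℝ → ℝ)
    (hΘ : ∀ y, y₀ < y → Θ y = ∫ t in Ioc y₀ y, (τ t)⁻¹)
    (hΘpos : ∀ y, y₀ < y → 0 < Θ y)
    (hΘinv_mem : ∀ x : ℝ, 0 < x → y₀ < Θinv x)
    (hΘ_Θinv : ∀ x : ℝ, 0 < x → Θ (Θinv x) = x)
    (hΘinv_Θ : ∀ y, y₀ < y → Θinv (Θ y) = y)
    (W : ℝ → (ℝ → ℝ) → ℝ → ℝ)
    (hW : ∀ t f y, W t f y =
      if t ≤ Θ y then τ (Θinv (Θ y - t)) / τ y * f (Θinv (Θ y - t)) else 0)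
    (f : ℝ → ℝ) (hfmeas : Measurable f)
    (hfint : IntegrableOn (fun y => y * |f y|) (Ioi y₀))
    (t : ℝ) (ht : 0 ≤ t) :
    ∫ y in Ioi y₀, y * |W t f y| ≤
      Real.exp (Cτ / y₀ * t) * ∫ y in Ioi y₀, y * |f y| := by
  set K := Cτ / y₀ with hK
  have hτcont : ContinuousOn τ (Ici y₀) := hτC1.continuousOn
  have hτlb' : ∀ y, y₀ ≤ y → τ₀ ≤ τ y := by
    intro y hy
    rcases eq_or_lt_of_le hy with rfl | h
    · have hc : ContinuousWithinAt τ (Ici y₀) y₀ := hτcont y₀ self_mem_Ici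
      have hc' : Filter.Tendsto τ (nhdsWithin y₀ (Ioi y₀)) (nhds (τ y₀)) :=
        hc.mono_left (nhdsWithin_mono _ Ioi_subset_Ici_self)
      exact ge_of_tendsto hc'
        (eventually_nhdsWithin_of_forall (fun x hx => hτlb x hx))
    · exact hτlb y h
  have hτpos : ∀ y, y₀ ≤ y → 0 < τ y := fun y hy => lt_of_lt_of_le hτ₀ (hτlb' y hy)
  have hτne : ∀ y, y₀ ≤ y → τ y ≠ 0 := fun y hy => (hτpos y hy).ne'
  have hCτ : 0 < Cτ :=
    lt_of_lt_of_le hτ₀ (le_trans (hτlb (y₀ + 1) (by linarith)) (hτub (y₀ + 1) (by linarith)))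
  have hKpos : 0 < K := div_pos hCτ hy₀
  -- derivative of Θ
  have hinvcont : ContinuousOn (fun s => (τ s)⁻¹) (Ici y₀) :=
    hτcont.inv₀ (fun s hs => hτne s hs)
  have hΘderiv : ∀ y ∈ Ioi y₀, HasDerivAt Θ (τ y)⁻¹ y := by
    intro y hy
    have hy' : y₀ < y := hy
    have hint : IntervalIntegrable (fun s => (τ s)⁻¹) volume y₀ y := by
      apply ContinuousOn.intervalIntegrable
      rw [uIcc_of_le hy'.le]
      exact hinvcont.mono Icc_subset_Ici_self
    have hmeas : StronglyMeasurableAtFilter (fun s => (τ s)⁻¹) (nhds y) volume :=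
      (hinvcont.mono Ioi_subset_Ici_self).stronglyMeasurableAtFilter isOpen_Ioi y hy
    have hcont : ContinuousAt (fun s => (τ s)⁻¹) y :=
      (hinvcont.mono Ioi_subset_Ici_self).continuousAt (isOpen_Ioi.mem_nhds hy)
    have hF : HasDerivAt (fun u => ∫ s in y₀..u, (τ s)⁻¹) (τ y)⁻¹ y :=
      intervalIntegral.integral_hasDerivAt_right hint hmeas hcont
    apply hF.congr_of_eventuallyEq
    filter_upwards [isOpen_Ioi.mem_nhds hy] with u hu
    rw [hΘ u hu, intervalIntegral.integral_of_le (le_of_lt hu)]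
  have hΘcont : ContinuousOn Θ (Ioi y₀) :=
    fun y hy => (hΘderiv y hy).continuousAt.continuousWithinAt
  have hΘmono : StrictMonoOn Θ (Ioi y₀) := by
    apply strictMonoOn_of_deriv_pos (convex_Ioi y₀) hΘcont
    intro x hx
    rw [interior_Ioi] at hx
    rw [(hΘderiv x hx).deriv]
    exact inv_pos.2 (hτpos x (le_of_lt hx))
  have hΘinv_mono : StrictMonoOn Θinv (Ioi (0 : ℝ)) := by
    intro a ha b hb hab
    by_contra hcon
    push_neg at hcon
    have h1 : b ≤ a := by
      rw [← hΘ_Θinv b hb, ← hΘ_Θinv a ha]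
      exact hΘmono.monotoneOn (hΘinv_mem b hb) (hΘinv_mem a ha) hcon
    linarith
  have hΘinv_image : Θinv '' Ioi (0 : ℝ) = Ioi y₀ := by
    apply Subset.antisymm
    · rintro _ ⟨x, hx, rfl⟩
      exact hΘinv_mem x hx
    · intro y hy
      exact ⟨Θ y, hΘpos y hy, hΘinv_Θ y hy⟩
  have hΘinv_contAt : ∀ x ∈ Ioi (0 : ℝ), ContinuousAt Θinv x := by
    intro x hx
    apply hΘinv_mono.continuousAt_of_image_mem_nhds (isOpen_Ioi.mem_nhds hx)
    rw [hΘinv_image]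
    exact isOpen_Ioi.mem_nhds (hΘinv_mem x hx)
  have hΘinvderiv : ∀ x ∈ Ioi (0 : ℝ), HasDerivAt Θinv (τ (Θinv x)) x := by
    intro x hx
    have h1 : HasDerivAt Θ (τ (Θinv x))⁻¹ (Θinv x) :=
      hΘderiv _ (hΘinv_mem x hx)
    have h2 : HasDerivAt Θinv ((τ (Θinv x))⁻¹)⁻¹ x := by
      apply HasDerivAt.of_local_left_inverse (hΘinv_contAt x hx) h1
        (inv_ne_zero (hτne _ (hΘinv_mem x hx).le))
      filter_upwards [isOpen_Ioi.mem_nhds hx] with u hu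
      exact hΘ_Θinv u hu
    rwa [inv_inv] at h2
  -- Grönwall key inequality
  have key : ∀ z ∈ Ioi y₀, Θinv (Θ z + t) ≤ Real.exp (K * t) * z := by
    intro z hz
    have hz' : y₀ < z := hz
    have hzpos : 0 < Θ z := hΘpos z hz'
    set F : ℝ → ℝ := fun s => Θinv (Θ z + s) with hFdef
    have hFderiv : ∀ s ∈ Icc 0 t, HasDerivAt F (τ (F s)) s := by
      intro s hs
      have hpos : 0 < Θ z + s := by linarith [hs.1]
      have h1 : HasDerivAt (fun s : ℝ => Θ z + s) 1 s :=
        (hasDerivAt_id s).const_add (Θ z)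
      have h2 := (hΘinvderiv _ (mem_Ioi.2 hpos)).comp s h1
      rw [mul_one] at h2
      exact h2
    have hmemF : ∀ s ∈ Icc 0 t, y₀ < F s := by
      intro s hs
      exact hΘinv_mem _ (by linarith [hs.1])
    have hgron := norm_le_gronwallBound_of_norm_deriv_right_le
      (f := F) (f' := fun s => τ (F s)) (δ := z) (K := K) (ε := 0) (a := 0) (b := t)
      (fun s hs => (hFderiv s hs).continuousAt.continuousWithinAt)
      (fun s hs => (hFderiv s (Ico_subset_Icc_self hs)).hasDerivWithinAt)
      (by
        have hF0 : F 0 = z := by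
          rw [hFdef]
          simp only [add_zero]
          exact hΘinv_Θ z hz'
        rw [hF0, Real.norm_eq_abs, abs_of_pos (by linarith : (0:ℝ) < z)])
      (by
        intro s hs
        have h1 : y₀ < F s := hmemF s (Ico_subset_Icc_self hs)
        have h2 : τ (F s) ≤ Cτ := hτub _ h1
        have h3 : 0 < τ (F s) := hτpos _ h1.le
        rw [Real.norm_eq_abs, Real.norm_eq_abs, abs_of_pos h3,
          abs_of_pos (by linarith : (0:ℝ) < F s), add_zero]
        have h4 : Cτ = K * y₀ := by
          rw [hK]; field_simp
        nlinarith)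
      t (right_mem_Icc.2 ht)
    rw [gronwallBound_ε0, sub_zero, Real.norm_eq_abs] at hgron
    calc Θinv (Θ z + t) = F t := rfl
      _ ≤ |F t| := le_abs_self _
      _ ≤ z * Real.exp (K * t) := hgron
      _ = Real.exp (K * t) * z := mul_comm _ _
  -- case t = 0
  rcases eq_or_lt_of_le ht with rfl | htpos
  · have heq : EqOn (fun y => y * |W 0 f y|) (fun y => y * |f y|) (Ioi y₀) := by
      intro y hy
      have hy' : y₀ < y := hy
      simp only
      rw [hW, if_pos (hΘpos y hy').le, sub_zero, hΘinv_Θ y hy',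
        div_self (hτne y hy'.le), one_mul]
    rw [setIntegral_congr_fun measurableSet_Ioi heq]
    simp
  -- case t > 0
  · set c := Θinv t with hcdef
    have hc' : y₀ < c := hΘinv_mem t htpos
    have hΘc : Θ c = t := hΘ_Θinv t htpos
    set g : ℝ → ℝ := fun z => Θinv (Θ z + t) with hgdef
    have hΘg : ∀ z ∈ Ioi y₀, Θ (g z) = Θ z + t := fun z hz =>
      hΘ_Θinv _ (add_pos (hΘpos z hz) htpos)
    have hgmem : ∀ z ∈ Ioi y₀, y₀ < g z := fun z hz =>
      hΘinv_mem _ (add_pos (hΘpos z hz) htpos)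
    have hgderiv : ∀ z ∈ Ioi y₀, HasDerivAt g (τ (g z) / τ z) z := by
      intro z hz
      have h1 : HasDerivAt (fun z => Θ z + t) (τ z)⁻¹ z := (hΘderiv z hz).add_const t
      have h2 := (hΘinvderiv _ (mem_Ioi.2 (add_pos (hΘpos z hz) htpos))).comp z h1
      rw [div_eq_mul_inv]
      exact h2
    have hginj : InjOn g (Ioi y₀) := by
      intro a ha b hb hab
      have hΘab : Θ a = Θ b := by
        have h1 := congrArg Θ hab
        rw [hΘg a ha, hΘg b hb] at h1
        linarith
      rw [← hΘinv_Θ a ha, ← hΘinv_Θ b hb, hΘab]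
    have hgimg : g '' Ioi y₀ = Ioi c := by
      apply Subset.antisymm
      · rintro _ ⟨z, hz, rfl⟩
        have h1 : Θ c < Θ (g z) := by
          rw [hΘc, hΘg z hz]
          linarith [hΘpos z hz]
        exact mem_Ioi.2 ((hΘmono.lt_iff_lt (mem_Ioi.2 hc') (mem_Ioi.2 (hgmem z hz))).1 h1)
      · intro y hy
        have hy' : y₀ < y := lt_trans hc' hy
        have hΘy : t < Θ y := by
          rw [← hΘc]
          exact hΘmono (mem_Ioi.2 hc') (mem_Ioi.2 hy') hy
        refine ⟨Θinv (Θ y - t), hΘinv_mem _ (by linarith), ?_⟩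
        show Θinv (Θ (Θinv (Θ y - t)) + t) = y
        rw [hΘ_Θinv _ (by linarith : (0:ℝ) < Θ y - t), sub_add_cancel, hΘinv_Θ y hy']
    -- Step A : restrict the integral to `Ioi c`
    have stepA : ∫ y in Ioi y₀, y * |W t f y| = ∫ y in Ioi c, y * |W t f y| := by
      have hne : ∀ᵐ y : ℝ, y ≠ c := by
        have hset : ({c} : Set ℝ) = {y | ¬ y ≠ c} := by ext y; simp
        rw [ae_iff, ← hset]
        exact measure_singleton c
      have hae : ∀ᵐ y ∂(volume.restrict (Ioi y₀)),
          y * |W t f y| = (Ioi c).indicator (fun y => y * |W t f y|) y := by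
        filter_upwards [ae_restrict_of_ae hne, ae_restrict_mem measurableSet_Ioi]
          with y hyne hy
        rcases lt_or_gt_of_ne hyne with h | h
        · have hΘy : Θ y < t := by
            rw [← hΘc]
            exact hΘmono (mem_Ioi.2 hy) (mem_Ioi.2 hc') h
          have hnotmem : y ∉ Ioi c := by
            simp only [mem_Ioi, not_lt]
            exact h.le
          rw [hW, if_neg (not_le.2 hΘy), Set.indicator_of_notMem hnotmem]
          simp
        · rw [indicator_of_mem (mem_Ioi.2 h)]
      rw [integral_congr_ae hae, setIntegral_indicator measurableSet_Ioi,
        Ioi_inter_Ioi, max_eq_right hc'.le]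
    -- Step B : change of variables
    have stepB : ∫ y in Ioi c, y * |W t f y| = ∫ z in Ioi y₀, g z * |f z| := by
      rw [← hgimg,
        integral_image_eq_integral_abs_deriv_smul (f' := fun z => τ (g z) / τ z)
          measurableSet_Ioi (fun z hz => (hgderiv z hz).hasDerivWithinAt) hginj]
      apply setIntegral_congr_fun measurableSet_Ioi
      intro z hz
      have hz0 : y₀ < z := hz
      have h0 : 0 < Θ z := hΘpos z hz0
      have hΘgz := hΘg z hz
      have hgz : y₀ < g z := hgmem z hz
      have hτz : 0 < τ z := hτpos z hz0.le
      have hτgz : 0 < τ (g z) := hτpos _ hgz.le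
      have hWgz : W t f (g z) = τ z / τ (g z) * f z := by
        rw [hW, if_pos (by rw [hΘgz]; linarith), hΘgz, add_sub_cancel_right,
          hΘinv_Θ z hz0]
      simp only [smul_eq_mul]
      rw [hWgz, abs_of_pos (div_pos hτgz hτz), abs_mul,
        abs_of_pos (div_pos hτz hτgz)]
      field_simp
    -- Step C : pointwise bound + integrability
    have hRHSint : IntegrableOn (fun z => Real.exp (K * t) * (z * |f z|)) (Ioi y₀) :=
      hfint.const_mul _
    have hgcont : ContinuousOn g (Ioi y₀) :=
      fun z hz => (hgderiv z hz).continuousAt.continuousWithinAt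
    have hmeasL : AEStronglyMeasurable (fun z => g z * |f z|)
        (volume.restrict (Ioi y₀)) :=
      (hgcont.aestronglyMeasurable measurableSet_Ioi).mul
        hfmeas.abs.aestronglyMeasurable
    have hptle : ∀ z ∈ Ioi y₀, g z * |f z| ≤ Real.exp (K * t) * (z * |f z|) := by
      intro z hz
      have h1 := key z hz
      calc g z * |f z| ≤ (Real.exp (K * t) * z) * |f z| :=
            mul_le_mul_of_nonneg_right h1 (abs_nonneg _)
        _ = Real.exp (K * t) * (z * |f z|) := by ring
    have hLint : IntegrableOn (fun z => g z * |f z|) (Ioi y₀) := by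
      apply Integrable.mono' hRHSint hmeasL
      refine (ae_restrict_iff' measurableSet_Ioi).2 (Filter.Eventually.of_forall fun z hz => ?_)
      rw [Real.norm_eq_abs,
        abs_of_nonneg (mul_nonneg (le_of_lt (lt_trans hy₀ (hgmem z hz))) (abs_nonneg _))]
      exact hptle z hz
    calc ∫ y in Ioi y₀, y * |W t f y| = ∫ z in Ioi y₀, g z * |f z| :=
          stepA.trans stepB
      _ ≤ ∫ z in Ioi y₀, Real.exp (K * t) * (z * |f z|) :=
          setIntegral_mono_on hLint hRHSint measurableSet_Ioi hptle
      _ = Real.exp (K * t) * ∫ z in Ioi y₀, z * |f z| := integral_const_mul _ _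
end
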